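/- Let E be a finite set and for each element e ∈ E let M_e be a positive semidefinite n×n complex (or real) matrix. Define f : 2^E → ℝ by f(S) = log det(I + Σ_{e∈S} M_e). Then f is submodular: for all A ⊆ B ⊆ E and e ∈ E \ B, f(A ∪ {e}) − f(A) ≥ f(B ∪ {e}) − f(B). -/

import Mathlib

open Matrix

section Aux

variable {n : ℕ}

lemma psd_vecMulVec (v : Fin n → ℝ) : (vecMulVec v v).PosSemidef := by
  refine posSemidef_iff_dotProduct_mulVec.mpr ⟨?_, ?_⟩
  · ext i j
    simp [vecMulVec_apply, conjTranspose_apply, mul_comm]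
  · intro x
    have h : (vecMulVec v v) *ᵥ x = fun i => v i * (v ⬝ᵥ x) := by
      ext i
      simp [mulVec, dotProduct, vecMulVec_apply, Finset.mul_sum, mul_assoc]
    rw [h]
    have h2 : star x ⬝ᵥ (fun i => v i * (v ⬝ᵥ x)) = (v ⬝ᵥ x) * (v ⬝ᵥ x) := by
      simp [dotProduct, Finset.sum_mul, mul_comm, mul_assoc, mul_left_comm]
    rw [h2]
    exact mul_self_nonneg _

lemma inv_sub_inv_eq {X D : Matrix (Fin n) (Fin n) ℝ} (hX : X.PosDef)
    (hXD : (X + D).PosDef) :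
    X⁻¹ - (X + D)⁻¹ = (X + D)⁻¹ * D * X⁻¹ := by
  have hx : IsUnit X.det := isUnit_iff_ne_zero.2 hX.det_pos.ne'
  have hy : IsUnit (X + D).det := isUnit_iff_ne_zero.2 hXD.det_pos.ne'
  have h : (X + D)⁻¹ * D * X⁻¹ = (X + D)⁻¹ * ((X + D) - X) * X⁻¹ := by
    congr 1
    congr 1
    abel
  rw [h, Matrix.mul_sub, Matrix.sub_mul, Matrix.nonsing_inv_mul _ hy,
    Matrix.mul_assoc, Matrix.mul_nonsing_inv _ hx, Matrix.one_mul, Matrix.mul_one]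

lemma inv_sub_inv_eq' {X D : Matrix (Fin n) (Fin n) ℝ} (hX : X.PosDef)
    (hXD : (X + D).PosDef) :
    X⁻¹ - (X + D)⁻¹ = X⁻¹ * D * (X + D)⁻¹ := by
  have hx : IsUnit X.det := isUnit_iff_ne_zero.2 hX.det_pos.ne'
  have hy : IsUnit (X + D).det := isUnit_iff_ne_zero.2 hXD.det_pos.ne'
  have h : X⁻¹ * D * (X + D)⁻¹ = X⁻¹ * ((X + D) - X) * (X + D)⁻¹ := by
    congr 1; congr 1; abel
  rw [h, Matrix.mul_sub, Matrix.sub_mul, Matrix.mul_assoc, Matrix.mul_nonsing_inv _ hy,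
    Matrix.nonsing_inv_mul _ hx, Matrix.one_mul, Matrix.mul_one]

/-- The difference of inverses is PSD. -/
lemma inv_sub_inv_posSemidef {X D : Matrix (Fin n) (Fin n) ℝ} (hX : X.PosDef)
    (hD : D.PosSemidef) : (X⁻¹ - (X + D)⁻¹).PosSemidef := by
  have hY : (X + D).PosDef := hX.add_posSemidef hD
  set Y := X + D with hYdef
  have hYinvH : Y⁻¹ᴴ = Y⁻¹ := hY.inv.isHermitian
  have hDH : Dᴴ = D := hD.isHermitian
  have key : X⁻¹ - Y⁻¹ = Y⁻¹ * D * Y⁻¹ + (D * Y⁻¹)ᴴ * X⁻¹ * (D * Y⁻¹) := by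
    have h1 : X⁻¹ - Y⁻¹ = Y⁻¹ * D * X⁻¹ := inv_sub_inv_eq hX hY
    have h2 : X⁻¹ = Y⁻¹ + X⁻¹ * D * Y⁻¹ := by
      have h := inv_sub_inv_eq' hX hY
      rw [← hYdef] at h
      exact sub_eq_iff_eq_add'.mp h
    calc X⁻¹ - Y⁻¹ = Y⁻¹ * D * X⁻¹ := h1
      _ = Y⁻¹ * D * (Y⁻¹ + X⁻¹ * D * Y⁻¹) := by rw [← h2]
      _ = Y⁻¹ * D * Y⁻¹ + (D * Y⁻¹)ᴴ * X⁻¹ * (D * Y⁻¹) := by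
          rw [conjTranspose_mul, hYinvH, hDH]
          noncomm_ring
  rw [key]
  have p1 : (Y⁻¹ * D * Y⁻¹).PosSemidef := by
    have := hD.conjTranspose_mul_mul_same Y⁻¹
    rwa [hYinvH] at this
  have p2 : ((D * Y⁻¹)ᴴ * X⁻¹ * (D * Y⁻¹)).PosSemidef :=
    hX.inv.posSemidef.conjTranspose_mul_mul_same _
  exact p1.add p2

lemma quad_mono {X D : Matrix (Fin n) (Fin n) ℝ} (hX : X.PosDef)
    (hD : D.PosSemidef) (v : Fin n → ℝ) :
    v ⬝ᵥ ((X + D)⁻¹ *ᵥ v) ≤ v ⬝ᵥ (X⁻¹ *ᵥ v) := by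
  have h := (inv_sub_inv_posSemidef hX hD).dotProduct_mulVec_nonneg v
  rw [star_trivial, sub_mulVec, dotProduct_sub] at h
  linarith

lemma det_rankone {X : Matrix (Fin n) (Fin n) ℝ} (hX : X.PosDef) (v : Fin n → ℝ) :
    (X + vecMulVec v v).det = X.det * (1 + v ⬝ᵥ (X⁻¹ *ᵥ v)) := by
  have hx : IsUnit X.det := isUnit_iff_ne_zero.2 hX.det_pos.ne'
  rw [vecMulVec_eq Unit, det_add_replicateCol_mul_replicateRow hx]
  congr 1
  rw [det_unique]
  have hsym : ∀ i j, X⁻¹ i j = X⁻¹ j i := fun i j => by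
    conv_lhs => rw [← hX.inv.isHermitian.eq]
    simp [conjTranspose_apply]
  simp only [Matrix.add_apply, Matrix.mul_apply, Matrix.replicateRow_apply, Matrix.replicateCol_apply, dotProduct,
    Matrix.mulVec, Matrix.one_apply_eq, Finset.mul_sum, Finset.sum_mul]
  congr 1
  refine Finset.sum_congr rfl fun x _ => Finset.sum_congr rfl fun i _ => ?_
  rw [hsym i x]
  ring

open scoped MatrixOrder in
lemma psd_decomp {N : Matrix (Fin n) (Fin n) ℝ} (hN : N.PosSemidef) :
    ∃ C : Matrix (Fin n) (Fin n) ℝ,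
      N = ∑ i : Fin n, vecMulVec (fun j => C i j) (fun j => C i j) := by
  obtain ⟨C, hC⟩ := CStarAlgebra.nonneg_iff_eq_star_mul_self.mp hN.nonneg
  refine ⟨C, hC.trans ?_⟩
  ext j k
  simp [Matrix.mul_apply, vecMulVec_apply, conjTranspose_apply, Matrix.sum_apply]

lemma sum_psd {ι : Type*} (s : Finset ι) (r : ι → Matrix (Fin n) (Fin n) ℝ)
    (hr : ∀ i, (r i).PosSemidef) : (∑ i ∈ s, r i).PosSemidef := by
  classical
  induction s using Finset.induction_on with
  | empty => simpa using Matrix.PosSemidef.zero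
  | insert _ _ hnot ih => rw [Finset.sum_insert hnot]; exact (hr _).add ih

lemma key_det {X D N : Matrix (Fin n) (Fin n) ℝ} (hX : X.PosDef)
    (hD : D.PosSemidef) (hN : N.PosSemidef) :
    (X + D + N).det * X.det ≤ (X + N).det * (X + D).det := by
  obtain ⟨C, hC⟩ := psd_decomp hN
  set r : Fin n → Matrix (Fin n) (Fin n) ℝ :=
    fun i => vecMulVec (fun j => C i j) (fun j => C i j) with hr
  have hri : ∀ i, (r i).PosSemidef := fun i => psd_vecMulVec _
  suffices h : ∀ s : Finset (Fin n),
      (X + D + ∑ i ∈ s, r i).det * X.det ≤ (X + ∑ i ∈ s, r i).det * (X + D).det by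
    rw [hC]; exact h Finset.univ
  intro s
  induction s using Finset.induction_on with
  | empty => simp [mul_comm]
  | @insert a s hnot ih =>
    have hS : (∑ i ∈ s, r i).PosSemidef := sum_psd s r hri
    have hX' : (X + ∑ i ∈ s, r i).PosDef := hX.add_posSemidef hS
    have hZ : (X + D + ∑ i ∈ s, r i).PosDef :=
      (hX.add_posSemidef hD).add_posSemidef hS
    have e1 : X + ∑ i ∈ insert a s, r i = (X + ∑ i ∈ s, r i) + r a := by
      rw [Finset.sum_insert hnot]; abel
    have e2 : X + D + ∑ i ∈ insert a s, r i = (X + D + ∑ i ∈ s, r i) + r a := by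
      rw [Finset.sum_insert hnot]; abel
    have e3 : X + D + ∑ i ∈ s, r i = (X + ∑ i ∈ s, r i) + D := by abel
    set v : Fin n → ℝ := fun j => C a j
    rw [e1, e2, det_rankone hX' v, det_rankone hZ v]
    set q1 := v ⬝ᵥ ((X + ∑ i ∈ s, r i)⁻¹ *ᵥ v)
    set q2 := v ⬝ᵥ ((X + D + ∑ i ∈ s, r i)⁻¹ *ᵥ v)
    have hq : q2 ≤ q1 := by
      have := quad_mono hX' hD v
      rw [← e3] at this
      exact this
    have hq2 : 0 ≤ q2 := by
      have := hZ.inv.posSemidef.dotProduct_mulVec_nonneg v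
      rwa [star_trivial] at this
    have d1 : 0 < X.det := hX.det_pos
    have d2 : 0 < (X + D).det := (hX.add_posSemidef hD).det_pos
    have d3 : 0 < (X + ∑ i ∈ s, r i).det := hX'.det_pos
    have d4 : 0 < (X + D + ∑ i ∈ s, r i).det := hZ.det_pos
    calc (X + D + ∑ i ∈ s, r i).det * (1 + q2) * X.det
        = (1 + q2) * ((X + D + ∑ i ∈ s, r i).det * X.det) := by ring
      _ ≤ (1 + q1) * ((X + ∑ i ∈ s, r i).det * (X + D).det) := by
          apply mul_le_mul (by linarith) ih (by positivity) (by linarith)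
      _ = (X + ∑ i ∈ s, r i).det * (1 + q1) * (X + D).det := by ring

end Aux

/-- `f(S) = log det(I + Σ_{e∈S} M_e)` with each `M_e` positive
semidefinite is a submodular set function. -/
theorem logdet_submodular {ι : Type*} [Fintype ι] [DecidableEq ι] {n : ℕ}
    (M : ι → Matrix (Fin n) (Fin n) ℝ) (hM : ∀ e, (M e).PosSemidef)
    (f : Finset ι → ℝ)
    (hf : ∀ S : Finset ι, f S = Real.log (Matrix.det (1 + ∑ e ∈ S, M e))) :
    ∀ A B : Finset ι, A ⊆ B → ∀ e ∉ B,
      f (insert e A) - f A ≥ f (insert e B) - f B := by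
  intro A B hAB e heB
  have heA : e ∉ A := fun h => heB (hAB h)
  set X : Matrix (Fin n) (Fin n) ℝ := 1 + ∑ a ∈ A, M a with hXdef
  set D : Matrix (Fin n) (Fin n) ℝ := ∑ a ∈ B \ A, M a with hDdef
  set N : Matrix (Fin n) (Fin n) ℝ := M e with hNdef
  have hX : X.PosDef := Matrix.PosDef.one.add_posSemidef (sum_psd A M hM)
  have hD : D.PosSemidef := sum_psd _ M hM
  have hN : N.PosSemidef := hM e
  have eB : (1 : Matrix (Fin n) (Fin n) ℝ) + ∑ a ∈ B, M a = X + D := by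
    rw [hXdef, hDdef, ← Finset.sum_sdiff hAB]; abel
  have eA' : (1 : Matrix (Fin n) (Fin n) ℝ) + ∑ a ∈ insert e A, M a = X + N := by
    rw [hXdef, hNdef, Finset.sum_insert heA]; abel
  have eB' : (1 : Matrix (Fin n) (Fin n) ℝ) + ∑ a ∈ insert e B, M a = X + D + N := by
    rw [hXdef, hDdef, hNdef, Finset.sum_insert heB, ← Finset.sum_sdiff hAB]; abel
  have d1 : 0 < X.det := hX.det_pos
  have d2 : 0 < (X + D).det := (hX.add_posSemidef hD).det_pos
  have d3 : 0 < (X + N).det := (hX.add_posSemidef hN).det_pos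
  have d4 : 0 < (X + D + N).det := ((hX.add_posSemidef hD).add_posSemidef hN).det_pos
  have hkey : (X + D + N).det * X.det ≤ (X + N).det * (X + D).det := key_det hX hD hN
  rw [hf (insert e A), hf A, hf (insert e B), hf B, eA', eB', eB, ← hXdef]
  have hlog := Real.log_le_log (by positivity) hkey
  rw [Real.log_mul d4.ne' d1.ne', Real.log_mul d3.ne' d2.ne'] at hlog
  linarith
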